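/- arXiv:2602.19191 — 2 statements merged into one kernel-verified Lean document; each statement's English description precedes it below -/
import Mathlib

section
/- Let w ∈ ℝ³, s_w = w_x + w_y + w_z, r_w = (w_y - w_z, w_z - w_x, w_x - w_y)ᵀ, and suppose r_w ≠ 0. For λ = i|w| or λ = -i|w|, define v = -|w|²(1,1,1)ᵀ + λ r_w + s_w w. Then w × v = λ v (cross product over ℂ³ with w viewed in ℂ³), i.e., v h(w) is an eigenvector of curl with eigenvalue iλ. -/
open Complex

theorem stmt_3 (w : Fin 3 → ℝ)
    (hr : ![w 1 - w 2, w 2 - w 0, w 0 - w 1] ≠ (0 : Fin 3 → ℝ))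
    (nw : ℝ) (hnw : nw = Real.sqrt (w 0 ^ 2 + w 1 ^ 2 + w 2 ^ 2))
    (lam : ℂ) (hlam : lam = Complex.I * nw ∨ lam = -(Complex.I * nw)) :
    let wc : Fin 3 → ℂ := fun j => (w j : ℂ)
    let rw : Fin 3 → ℂ := ![(w 1 : ℂ) - w 2, (w 2 : ℂ) - w 0, (w 0 : ℂ) - w 1]
    let sw : ℂ := (w 0 : ℂ) + w 1 + w 2
    let v : Fin 3 → ℂ := fun j => -(nw : ℂ) ^ 2 + lam * rw j + sw * wc j
    crossProduct wc v = lam • v := by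
  intro wc rw sw v
  have hn2 : (nw : ℂ) ^ 2 = (w 0 : ℂ) ^ 2 + (w 1 : ℂ) ^ 2 + (w 2 : ℂ) ^ 2 := by
    have h : nw ^ 2 = w 0 ^ 2 + w 1 ^ 2 + w 2 ^ 2 := by
      rw [hnw, Real.sq_sqrt (by positivity)]
    exact_mod_cast congrArg (Complex.ofReal) h
  have hl2 : lam ^ 2 = -((w 0 : ℂ) ^ 2 + (w 1 : ℂ) ^ 2 + (w 2 : ℂ) ^ 2) := by
    rcases hlam with h | h <;> rw [h] <;>
      · rw [← hn2]; ring_nf; simp [Complex.I_sq]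
  funext j
  fin_cases j <;>
    simp [crossProduct, wc, rw, sw, v]
  · linear_combination (-((w 1 : ℂ) - w 2)) * hn2 + (-((w 1 : ℂ) - w 2)) * hl2 + lam * hn2
  · linear_combination (-((w 2 : ℂ) - w 0)) * hn2 + (-((w 2 : ℂ) - w 0)) * hl2 + lam * hn2
  · linear_combination (-((w 0 : ℂ) - w 1)) * hn2 + (-((w 0 : ℂ) - w 1)) * hl2 + lam * hn2
end

section
/- Let w ∈ ℝ³ with r_w ≠ 0, and for a ∈ ℂ³ define α_1 = (w·a)/|w|, α_2 and α_3 by formula (when s_w = 0): α_2 = -s_a/(2γ_w²) - i(a·r_w)/(2|w|γ_w²), α_3 = -s_a/(2γ_w²) + i(a·r_w)/(2|w|γ_w²), where s_a = a_x+a_y+a_z and γ_w = |r_w|. Then with v_1 = w/|w| and v_d = -|w|²(1,1,1)ᵀ + λ_d r_w + s_w w for λ_2 = i|w|, λ_3 = -i|w|, we have a = α_1 v_1 + α_2 v_2 + α_3 v_3. -/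
open Complex

private lemma stmt_8_aux (w0 w1 w2 nw γ : ℝ) (a0 a1 a2 : ℂ)
    (hsw : w0 + w1 + w2 = 0)
    (hnw2 : ((nw:ℝ):ℂ) ^ 2 = (w0:ℂ)^2 + (w1:ℂ)^2 + (w2:ℂ)^2)
    (hγ2 : ((γ:ℝ):ℂ) ^ 2 = ((w1:ℂ)-w2)^2 + ((w2:ℂ)-w0)^2 + ((w0:ℂ)-w1)^2)
    (hnw0 : ((nw:ℝ):ℂ) ≠ 0) :
    a0 = (((w0:ℂ)*a0+(w1:ℂ)*a1+(w2:ℂ)*a2) / nw) * ((w0:ℂ)/nw)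
      + (-(a0+a1+a2) / (2*(γ:ℂ)^2) - I * (a0*((w1:ℂ)-w2)+a1*((w2:ℂ)-w0)+a2*((w0:ℂ)-w1)) / (2*nw*(γ:ℂ)^2)) * (-(nw:ℂ)^2 + I*nw*((w1:ℂ)-w2) + ((w0:ℂ)+w1+w2)*(w0:ℂ))
      + (-(a0+a1+a2) / (2*(γ:ℂ)^2) + I * (a0*((w1:ℂ)-w2)+a1*((w2:ℂ)-w0)+a2*((w0:ℂ)-w1)) / (2*nw*(γ:ℂ)^2)) * (-(nw:ℂ)^2 - I*nw*((w1:ℂ)-w2) + ((w0:ℂ)+w1+w2)*(w0:ℂ)) := by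
  have hsc : (w0:ℂ) + w1 + w2 = 0 := by exact_mod_cast congrArg Complex.ofReal hsw
  have h0 : (w0:ℂ) = -((w1:ℂ)+(w2:ℂ)) := by linear_combination hsc
  have hg3 : ((γ:ℂ))^2 = 3 * (nw:ℂ)^2 := by rw [hγ2, hnw2, h0]; ring
  set sa : ℂ := a0+a1+a2 with hsa
  set ar : ℂ := a0*((w1:ℂ)-w2)+a1*((w2:ℂ)-w0)+a2*((w0:ℂ)-w1) with har
  set wa : ℂ := (w0:ℂ)*a0+(w1:ℂ)*a1+(w2:ℂ)*a2 with hwa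
  have e2 : (I*ar/((nw:ℂ)*(γ:ℂ)^2))*(I*(nw:ℂ)*((w1:ℂ)-w2)) = -(ar*((w1:ℂ)-w2)/(γ:ℂ)^2) := by
    have h' : (I*ar/((nw:ℂ)*(γ:ℂ)^2))*(I*(nw:ℂ)*((w1:ℂ)-w2))
        = (I*I) * (ar*((w1:ℂ)-w2)) * ((nw:ℂ)/(nw:ℂ)) / (γ:ℂ)^2 := by ring
    rw [h', div_self hnw0, Complex.I_mul_I]; ring
  have e1 : (wa / (nw:ℂ)) * ((w0:ℂ)/nw)
      + (-sa / (2*(γ:ℂ)^2) - I * ar / (2*nw*(γ:ℂ)^2)) * (-(nw:ℂ)^2 + I*nw*((w1:ℂ)-w2) + ((w0:ℂ)+w1+w2)*(w0:ℂ))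
      + (-sa / (2*(γ:ℂ)^2) + I * ar / (2*nw*(γ:ℂ)^2)) * (-(nw:ℂ)^2 - I*nw*((w1:ℂ)-w2) + ((w0:ℂ)+w1+w2)*(w0:ℂ))
      = wa * (w0:ℂ) / (nw:ℂ)^2 + (-sa/(γ:ℂ)^2) * (-(nw:ℂ)^2 + ((w0:ℂ)+w1+w2)*(w0:ℂ))
        - (I*ar/((nw:ℂ)*(γ:ℂ)^2))*(I*(nw:ℂ)*((w1:ℂ)-w2)) := by ring
  have hnn : ((nw:ℝ):ℂ)^2 ≠ 0 := pow_ne_zero 2 hnw0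
  have hS : ((w0:ℂ)^2 + (w1:ℂ)^2 + (w2:ℂ)^2) ≠ 0 := hnw2 ▸ hnn
  rw [e1, e2, hsc, hg3, hnw2]
  field_simp [hS]
  rw [hsa, har, hwa, h0]
  ring

theorem stmt_8 (w : Fin 3 → ℝ) (a : Fin 3 → ℂ)
    (hr : ![w 1 - w 2, w 2 - w 0, w 0 - w 1] ≠ (0 : Fin 3 → ℝ))
    (hsw : w 0 + w 1 + w 2 = 0) :
    let nw : ℝ := Real.sqrt (w 0 ^ 2 + w 1 ^ 2 + w 2 ^ 2)
    let γ : ℝ := Real.sqrt ((w 1 - w 2) ^ 2 + (w 2 - w 0) ^ 2 + (w 0 - w 1) ^ 2)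
    let rw : Fin 3 → ℂ := ![(w 1 : ℂ) - w 2, (w 2 : ℂ) - w 0, (w 0 : ℂ) - w 1]
    let sw : ℂ := (w 0 : ℂ) + w 1 + w 2
    let sa : ℂ := a 0 + a 1 + a 2
    let wa : ℂ := (w 0 : ℂ) * a 0 + (w 1 : ℂ) * a 1 + (w 2 : ℂ) * a 2
    let ar : ℂ := a 0 * rw 0 + a 1 * rw 1 + a 2 * rw 2
    let α₁ : ℂ := wa / nw
    let α₂ : ℂ := -sa / (2 * γ ^ 2) - Complex.I * ar / (2 * nw * γ ^ 2)
    let α₃ : ℂ := -sa / (2 * γ ^ 2) + Complex.I * ar / (2 * nw * γ ^ 2)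
    let v₁ : Fin 3 → ℂ := fun j => (w j : ℂ) / nw
    let v₂ : Fin 3 → ℂ := fun j => -(nw : ℂ) ^ 2 + Complex.I * nw * rw j + sw * (w j : ℂ)
    let v₃ : Fin 3 → ℂ := fun j => -(nw : ℂ) ^ 2 - Complex.I * nw * rw j + sw * (w j : ℂ)
    0 < nw →
    a = α₁ • v₁ + α₂ • v₂ + α₃ • v₃ := by
  intro nw γ rw sw sa wa ar α₁ α₂ α₃ v₁ v₂ v₃ hnw
  have hγpos : 0 < γ := by
    have hpos : 0 < (w 1 - w 2) ^ 2 + (w 2 - w 0) ^ 2 + (w 0 - w 1) ^ 2 := by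
      by_contra h
      push_neg at h
      apply hr
      funext j
      fin_cases j <;> simp <;>
        nlinarith [sq_nonneg (w 1 - w 2), sq_nonneg (w 2 - w 0), sq_nonneg (w 0 - w 1)]
    exact Real.sqrt_pos.mpr hpos
  have hnwr : (nw : ℝ) ^ 2 = w 0 ^ 2 + w 1 ^ 2 + w 2 ^ 2 := Real.sq_sqrt (by positivity)
  have hγr : (γ : ℝ) ^ 2 = (w 1 - w 2) ^ 2 + (w 2 - w 0) ^ 2 + (w 0 - w 1) ^ 2 :=
    Real.sq_sqrt (by positivity)
  have hnw2 : ((nw : ℝ) : ℂ) ^ 2 = ((w 0 : ℝ) : ℂ) ^ 2 + ((w 1 : ℝ) : ℂ) ^ 2 + ((w 2 : ℝ) : ℂ) ^ 2 := by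
    exact_mod_cast congrArg Complex.ofReal hnwr
  have hγ2 : ((γ : ℝ) : ℂ) ^ 2 = (((w 1 : ℝ) : ℂ) - ((w 2 : ℝ) : ℂ)) ^ 2 + (((w 2 : ℝ) : ℂ) - ((w 0 : ℝ) : ℂ)) ^ 2 + (((w 0 : ℝ) : ℂ) - ((w 1 : ℝ) : ℂ)) ^ 2 := by
    exact_mod_cast congrArg Complex.ofReal hγr
  have hnw0 : ((nw : ℝ) : ℂ) ≠ 0 := by exact_mod_cast ne_of_gt hnw
  have hsw1 : w 1 + w 2 + w 0 = 0 := by linarith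
  have hsw2 : w 2 + w 0 + w 1 = 0 := by linarith
  have hnw21 : ((nw : ℝ) : ℂ) ^ 2 = ((w 1 : ℝ) : ℂ) ^ 2 + ((w 2 : ℝ) : ℂ) ^ 2 + ((w 0 : ℝ) : ℂ) ^ 2 := by
    rw [hnw2]; ring
  have hnw22 : ((nw : ℝ) : ℂ) ^ 2 = ((w 2 : ℝ) : ℂ) ^ 2 + ((w 0 : ℝ) : ℂ) ^ 2 + ((w 1 : ℝ) : ℂ) ^ 2 := by
    rw [hnw2]; ring
  have hγ21 : ((γ : ℝ) : ℂ) ^ 2 = (((w 2 : ℝ) : ℂ) - ((w 0 : ℝ) : ℂ)) ^ 2 + (((w 0 : ℝ) : ℂ) - ((w 1 : ℝ) : ℂ)) ^ 2 + (((w 1 : ℝ) : ℂ) - ((w 2 : ℝ) : ℂ)) ^ 2 := by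
    rw [hγ2]; ring
  have hγ22 : ((γ : ℝ) : ℂ) ^ 2 = (((w 0 : ℝ) : ℂ) - ((w 1 : ℝ) : ℂ)) ^ 2 + (((w 1 : ℝ) : ℂ) - ((w 2 : ℝ) : ℂ)) ^ 2 + (((w 2 : ℝ) : ℂ) - ((w 0 : ℝ) : ℂ)) ^ 2 := by
    rw [hγ2]; ring
  funext j
  fin_cases j
  · show a 0 = (((w 0:ℂ)*a 0+(w 1:ℂ)*a 1+(w 2:ℂ)*a 2) / nw) * ((w 0:ℂ)/nw)
      + (-(a 0+a 1+a 2) / (2*(γ:ℂ)^2) - I * (a 0*((w 1:ℂ)-w 2)+a 1*((w 2:ℂ)-w 0)+a 2*((w 0:ℂ)-w 1)) / (2*nw*(γ:ℂ)^2)) * (-(nw:ℂ)^2 + I*nw*((w 1:ℂ)-w 2) + ((w 0:ℂ)+w 1+w 2)*(w 0:ℂ))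
      + (-(a 0+a 1+a 2) / (2*(γ:ℂ)^2) + I * (a 0*((w 1:ℂ)-w 2)+a 1*((w 2:ℂ)-w 0)+a 2*((w 0:ℂ)-w 1)) / (2*nw*(γ:ℂ)^2)) * (-(nw:ℂ)^2 - I*nw*((w 1:ℂ)-w 2) + ((w 0:ℂ)+w 1+w 2)*(w 0:ℂ))
    exact stmt_8_aux (w 0) (w 1) (w 2) nw γ (a 0) (a 1) (a 2) hsw hnw2 hγ2 hnw0
  · show a 1 = (((w 0:ℂ)*a 0+(w 1:ℂ)*a 1+(w 2:ℂ)*a 2) / nw) * ((w 1:ℂ)/nw)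
      + (-(a 0+a 1+a 2) / (2*(γ:ℂ)^2) - I * (a 0*((w 1:ℂ)-w 2)+a 1*((w 2:ℂ)-w 0)+a 2*((w 0:ℂ)-w 1)) / (2*nw*(γ:ℂ)^2)) * (-(nw:ℂ)^2 + I*nw*((w 2:ℂ)-w 0) + ((w 0:ℂ)+w 1+w 2)*(w 1:ℂ))
      + (-(a 0+a 1+a 2) / (2*(γ:ℂ)^2) + I * (a 0*((w 1:ℂ)-w 2)+a 1*((w 2:ℂ)-w 0)+a 2*((w 0:ℂ)-w 1)) / (2*nw*(γ:ℂ)^2)) * (-(nw:ℂ)^2 - I*nw*((w 2:ℂ)-w 0) + ((w 0:ℂ)+w 1+w 2)*(w 1:ℂ))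
    have h := stmt_8_aux (w 1) (w 2) (w 0) nw γ (a 1) (a 2) (a 0) hsw1 hnw21 hγ21 hnw0
    linear_combination h
  · show a 2 = (((w 0:ℂ)*a 0+(w 1:ℂ)*a 1+(w 2:ℂ)*a 2) / nw) * ((w 2:ℂ)/nw)
      + (-(a 0+a 1+a 2) / (2*(γ:ℂ)^2) - I * (a 0*((w 1:ℂ)-w 2)+a 1*((w 2:ℂ)-w 0)+a 2*((w 0:ℂ)-w 1)) / (2*nw*(γ:ℂ)^2)) * (-(nw:ℂ)^2 + I*nw*((w 0:ℂ)-w 1) + ((w 0:ℂ)+w 1+w 2)*(w 2:ℂ))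
      + (-(a 0+a 1+a 2) / (2*(γ:ℂ)^2) + I * (a 0*((w 1:ℂ)-w 2)+a 1*((w 2:ℂ)-w 0)+a 2*((w 0:ℂ)-w 1)) / (2*nw*(γ:ℂ)^2)) * (-(nw:ℂ)^2 - I*nw*((w 0:ℂ)-w 1) + ((w 0:ℂ)+w 1+w 2)*(w 2:ℂ))
    have h := stmt_8_aux (w 2) (w 0) (w 1) nw γ (a 2) (a 0) (a 1) hsw2 hnw22 hγ22 hnw0
    linear_combination h
end
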